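/- For every n ≥ 2, over the alphabet Σ = {b, a₁, …, aₙ}, the finite language Lₙ = {a₁, aₙ} ∪ { bⁱ a_{i+1} : 1 ≤ i < n } ∪ { aᵢ bⁱ : 1 ≤ i < n } is not a code, and the shortest word in Lₙ* having two distinct factorizations into elements of Lₙ is a₁ b a₂ b² a₃ b³ ⋯ a_{n-1} b^{n-1} aₙ, of length n(n+1)/2. -/

import Mathlib

open Computability
open Fin.NatCast

/-- `l` is a factorization of `x` into elements of `L`. -/
def IsFactorization {α : Type*} (L : Language α) (x : List α) (l : List (List α)) : Prop :=
  (∀ w ∈ l, w ∈ L) ∧ l.flatten = x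

/-- `L` is a code: every word has at most one factorization into elements of `L`. -/
def IsCode {α : Type*} (L : Language α) : Prop :=
  ∀ x l₁ l₂, IsFactorization L x l₁ → IsFactorization L x l₂ → l₁ = l₂

/-- The alphabet `{b, a₁, …, aₙ}` is encoded as `Option (Fin n)`, with `none` playing the
role of `b` and `some (i-1)` playing the role of `aᵢ`.  `Lc n` is the language
`{a₁, aₙ} ∪ { bⁱ a_{i+1} : 1 ≤ i < n } ∪ { aᵢ bⁱ : 1 ≤ i < n }`. -/
def Lc (n : ℕ) [NeZero n] : Language (Option (Fin n)) := show Set (List (Option (Fin n))) from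
  {[some ((0 : ℕ) : Fin n)], [some ((n - 1 : ℕ) : Fin n)]} ∪
  {w | ∃ i, 1 ≤ i ∧ i < n ∧ w = List.replicate i none ++ [some ((i : ℕ) : Fin n)]} ∪
  {w | ∃ i, 1 ≤ i ∧ i < n ∧ w = some ((i - 1 : ℕ) : Fin n) :: List.replicate i none}

/-- The word `a₁ b a₂ b² a₃ b³ ⋯ a_{n-1} b^{n-1} aₙ`. -/
def xc (n : ℕ) [NeZero n] : List (Option (Fin n)) :=
  ((List.range (n - 1)).map
    (fun j => some ((j : ℕ) : Fin n) :: List.replicate (j + 1) none)).flatten ++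
    [some ((n - 1 : ℕ) : Fin n)]


lemma castinj {n : ℕ} [NeZero n] {i j : ℕ} (hi : i < n) (hj : j < n)
    (h : ((i : ℕ) : Fin n) = ((j : ℕ) : Fin n)) : i = j := by
  have := congrArg Fin.val h
  rwa [Fin.val_cast_of_lt hi, Fin.val_cast_of_lt hj] at this

lemma mem_Lc {n : ℕ} [NeZero n] {w : List (Option (Fin n))} (h : w ∈ Lc n) :
    w = [some ((0:ℕ) : Fin n)] ∨ w = [some ((n-1:ℕ) : Fin n)] ∨
    (∃ i, 1 ≤ i ∧ i < n ∧ w = List.replicate i none ++ [some ((i:ℕ) : Fin n)]) ∨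
    (∃ i, 1 ≤ i ∧ i < n ∧ w = some ((i-1:ℕ) : Fin n) :: List.replicate i none) := by
  rcases h with ((h | h) | h) | h
  · exact Or.inl h
  · exact Or.inr (Or.inl h)
  · exact Or.inr (Or.inr (Or.inl h))
  · exact Or.inr (Or.inr (Or.inr h))

lemma m1 {n : ℕ} [NeZero n] : [some ((0:ℕ) : Fin n)] ∈ Lc n := Or.inl (Or.inl (Or.inl rfl))
lemma m2 {n : ℕ} [NeZero n] : [some ((n-1:ℕ) : Fin n)] ∈ Lc n := Or.inl (Or.inl (Or.inr rfl))
lemma m3 {n : ℕ} [NeZero n] {i : ℕ} (h1 : 1 ≤ i) (h2 : i < n) :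
    List.replicate i none ++ [some ((i:ℕ) : Fin n)] ∈ Lc n := Or.inl (Or.inr ⟨i, h1, h2, rfl⟩)
lemma m4 {n : ℕ} [NeZero n] {i : ℕ} (h1 : 1 ≤ i) (h2 : i < n) :
    some ((i-1:ℕ) : Fin n) :: List.replicate i none ∈ Lc n := Or.inr ⟨i, h1, h2, rfl⟩

lemma word_ne_nil {n : ℕ} [NeZero n] {w : List (Option (Fin n))} (h : w ∈ Lc n) : w ≠ [] := by
  rcases mem_Lc h with rfl | rfl | ⟨i, h1, h2, rfl⟩ | ⟨i, h1, h2, rfl⟩ <;> simp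
lemma rep_pivot {β : Type*} {b x y : β} (hx : x ≠ b) (hy : y ≠ b) :
    ∀ i k (s t : List β), List.replicate i b ++ x :: s = List.replicate k b ++ y :: t →
      i = k ∧ x = y ∧ s = t := by
  intro i
  induction i with
  | zero =>
    intro k s t h
    cases k with
    | zero => simpa using h
    | succ k =>
      rw [List.replicate_succ] at h
      simp at h
      exact absurd h.1 hx
  | succ i ih =>
    intro k s t h
    cases k with
    | zero =>
      rw [List.replicate_succ] at h
      simp at h
      exact absurd h.1.symm hy
    | succ k =>
      rw [List.replicate_succ, List.replicate_succ] at h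
      simp only [List.cons_append, List.cons.injEq] at h
      obtain ⟨hik, hxy, hst⟩ := ih k s t h.2
      exact ⟨by omega, hxy, hst⟩

lemma diverge {β : Type*} : ∀ (l₁ l₂ : List (List β)), l₁.flatten = l₂.flatten → l₁ ≠ l₂ →
    (∀ w ∈ l₁, w ≠ []) → (∀ w ∈ l₂, w ≠ []) →
    ∃ u r₁ v r₂, u ≠ v ∧ u ++ r₁.flatten = v ++ r₂.flatten ∧
      (u :: r₁) <:+ l₁ ∧ (v :: r₂) <:+ l₂ := by
  intro l₁
  induction l₁ with
  | nil =>
    intro l₂ hf hne h1 h2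
    cases l₂ with
    | nil => exact absurd rfl hne
    | cons v t =>
      exfalso
      simp only [List.flatten_nil, List.flatten_cons] at hf
      exact h2 v (by simp) (List.append_eq_nil_iff.mp hf.symm).1
  | cons u t₁ ih =>
    intro l₂ hf hne h1 h2
    cases l₂ with
    | nil =>
      exfalso
      simp only [List.flatten_nil, List.flatten_cons] at hf
      exact h1 u (by simp) (List.append_eq_nil_iff.mp hf).1
    | cons v t₂ =>
      by_cases huv : u = v
      · subst huv
        have hff : t₁.flatten = t₂.flatten := by
          simp only [List.flatten_cons] at hf
          exact List.append_cancel_left hf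
        have hne' : t₁ ≠ t₂ := fun h => hne (by rw [h])
        obtain ⟨u', r₁, v', r₂, a, b, c, d⟩ := ih t₂ hff hne'
          (fun w hw => h1 w (by simp [hw])) (fun w hw => h2 w (by simp [hw]))
        exact ⟨u', r₁, v', r₂, a, b, c.trans (List.suffix_cons _ _),
          d.trans (List.suffix_cons _ _)⟩
      · exact ⟨u, t₁, v, t₂, huv, by simpa using hf, List.suffix_refl _, List.suffix_refl _⟩

lemma flatten_aux {β : Type*} (s : ℕ → β) (t : ℕ → List β) :
    ∀ m, (((List.range m).map (fun j => s j :: t j)).flatten) ++ [s m] =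
      s 0 :: (((List.range m).map (fun j => t j ++ [s (j+1)])).flatten) := by
  intro m
  induction m with
  | zero => simp
  | succ m ih =>
    rw [List.range_succ]
    simp only [List.map_append, List.flatten_append, List.map_cons, List.map_nil,
      List.flatten_cons, List.flatten_nil, List.append_nil]
    conv_lhs => rw [← List.singleton_append, ← List.append_assoc, ih]
    simp

lemma len_aux {β : Type*} (s : ℕ → β) (b : β) :
    ∀ m, 2 * (((List.range m).map (fun j => s j :: List.replicate (j+1) b)).flatten).length
      = m * (m + 3) := by
  intro m
  induction m with
  | zero => simp
  | succ m ih =>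
    rw [List.range_succ]
    simp only [List.map_append, List.flatten_append, List.map_cons, List.map_nil,
      List.flatten_cons, List.flatten_nil, List.append_nil, List.length_append,
      List.length_cons, List.length_replicate]
    have : (m+1) * (m+1+3) = m * (m+3) + 2 * (m + 1 + 1) := by ring
    omega

lemma chase (n : ℕ) [NeZero n] :
    ∀ m k, 1 ≤ k → k < n →
    ∀ r₁ r₂ : List (List (Option (Fin n))), n - k ≤ m →
    (∀ w ∈ r₁, w ∈ Lc n) → (∀ w ∈ r₂, w ∈ Lc n) →
    r₁.flatten = List.replicate k none ++ r₂.flatten →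
    n * (n + 1) ≤ k * (k + 1) + 2 * r₁.flatten.length := by
  intro m
  induction m with
  | zero => intro k hk1 hk2 r₁ r₂ hm; omega
  | succ m ih =>
    intro k hk1 hk2 r₁ r₂ hm h1 h2 heq
    obtain ⟨w, t₁, rfl⟩ : ∃ w t₁, r₁ = w :: t₁ := by
      cases r₁ with
      | nil =>
        exfalso
        have h0 := congrArg List.length heq
        simp only [List.flatten_nil, List.length_nil, List.length_append,
          List.length_replicate] at h0
        omega
      | cons w t => exact ⟨w, t, rfl⟩
    rw [List.flatten_cons] at heq
    obtain ⟨k', rfl⟩ : ∃ k', k = k' + 1 := ⟨k - 1, by omega⟩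
    have hw := h1 w (by simp)
    obtain ⟨i, hi1, hi2, rfl⟩ :
        ∃ i, 1 ≤ i ∧ i < n ∧ w = List.replicate i none ++ [some ((i:ℕ):Fin n)] := by
      rcases mem_Lc hw with rfl | rfl | hi | ⟨i, hi1, hi2, rfl⟩
      · rw [List.replicate_succ] at heq; simp at heq
      · rw [List.replicate_succ] at heq; simp at heq
      · exact hi
      · rw [List.replicate_succ] at heq; simp at heq
    rw [List.append_assoc, List.singleton_append] at heq
    have hik : i = k' + 1 ∧ r₂.flatten = some ((i:ℕ):Fin n) :: t₁.flatten := by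
      rcases lt_trichotomy i (k' + 1) with h | h | h
      · exfalso
        rw [show k' + 1 = i + (k' + 1 - i) by omega, List.replicate_add,
          List.append_assoc] at heq
        have heq2 := List.append_cancel_left heq
        obtain ⟨d, hd⟩ : ∃ d, k' + 1 - i = d + 1 := ⟨k' - i, by omega⟩
        rw [hd, List.replicate_succ] at heq2
        simp at heq2
      · subst h
        exact ⟨rfl, (List.append_cancel_left heq).symm⟩
      · exfalso
        rw [show i = (k' + 1) + (i - (k' + 1)) by omega, List.replicate_add,
          List.append_assoc] at heq
        have heq2 := List.append_cancel_left heq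
        obtain ⟨w₂, t₂, rfl⟩ : ∃ w₂ t₂, r₂ = w₂ :: t₂ := by
          cases r₂ with
          | nil =>
            exfalso
            have h0 := congrArg List.length heq2
            simp only [List.flatten_nil, List.length_nil, List.length_append,
              List.length_replicate, List.length_cons] at h0
            omega
          | cons w₂ t₂ => exact ⟨w₂, t₂, rfl⟩
        rw [List.flatten_cons] at heq2
        have hw₂ := h2 w₂ (by simp)
        obtain ⟨j, hj1, hj2, rfl⟩ :
            ∃ j, 1 ≤ j ∧ j < n ∧ w₂ = List.replicate j none ++ [some ((j:ℕ):Fin n)] := by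
          obtain ⟨d, hd⟩ : ∃ d, i - (k' + 1) = d + 1 := ⟨i - (k' + 1) - 1, by omega⟩
          rcases mem_Lc hw₂ with rfl | rfl | hj | ⟨j, hj1, hj2, rfl⟩
          · rw [hd, List.replicate_succ] at heq2; simp at heq2
          · rw [hd, List.replicate_succ] at heq2; simp at heq2
          · exact hj
          · rw [hd, List.replicate_succ] at heq2; simp at heq2
        rw [List.append_assoc, List.singleton_append] at heq2
        obtain ⟨he1, he2, -⟩ := rep_pivot (by simp) (by simp) _ _ _ _ heq2
        have := castinj (show k' + 1 + (i - (k' + 1)) < n by omega) hj2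
          (Option.some_injective _ he2)
        omega
    obtain ⟨rfl, hT⟩ : i = k' + 1 ∧ r₂.flatten = some ((k'+1:ℕ):Fin n) :: t₁.flatten := by
      obtain ⟨h, hT⟩ := hik; subst h; exact ⟨rfl, hT⟩
    obtain ⟨w₂, t₂, rfl⟩ : ∃ w₂ t₂, r₂ = w₂ :: t₂ := by
      cases r₂ with
      | nil => exfalso; simp at hT
      | cons w₂ t₂ => exact ⟨w₂, t₂, rfl⟩
    rw [List.flatten_cons] at hT
    have hw₂ := h2 w₂ (by simp)
    have hlen : ((List.replicate (k'+1) (none : Option (Fin n)) ++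
        [some ((k'+1:ℕ):Fin n)]) :: t₁).flatten.length = (k' + 2) + t₁.flatten.length := by
      simp
      omega
    rcases mem_Lc hw₂ with rfl | rfl | ⟨j, hj1, hj2, rfl⟩ | ⟨j, hj1, hj2, rfl⟩
    · exfalso
      rw [List.singleton_append] at hT
      obtain ⟨ha, hb⟩ := List.cons_eq_cons.mp hT
      have := castinj (Nat.pos_of_ne_zero (NeZero.ne n)) hi2 (Option.some_injective _ ha)
      omega
    · rw [List.singleton_append] at hT
      obtain ⟨ha, hb⟩ := List.cons_eq_cons.mp hT
      have hn1 : n - 1 = k' + 1 := castinj (by omega) hi2 (Option.some_injective _ ha)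
      have hnk : n = k' + 2 := by omega
      subst hnk
      rw [hlen]
      nlinarith [t₁.flatten.length]
    · exfalso
      obtain ⟨d, rfl⟩ : ∃ d, j = d + 1 := ⟨j - 1, by omega⟩
      rw [List.replicate_succ] at hT
      simp at hT
    · rw [List.cons_append] at hT
      obtain ⟨ha, hb⟩ := List.cons_eq_cons.mp hT
      have hj : j - 1 = k' + 1 := castinj (by omega) hi2 (Option.some_injective _ ha)
      obtain rfl : j = k' + 2 := by omega
      have HI := ih (k' + 2) (by omega) hj2 t₁ t₂ (by omega)
        (fun w hw => h1 w (by simp [hw])) (fun w hw => h2 w (by simp [hw])) hb.symm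
      rw [hlen]
      have hr : (k'+2)*(k'+2+1) = (k'+1)*(k'+1+1) + 2*(k'+2) := by ring
      linarith

lemma seed {n : ℕ} [NeZero n] {u v : List (Option (Fin n))} (hu : u ∈ Lc n) (hv : v ∈ Lc n)
    (hne : u ≠ v) (hp : u <+: v) :
    u = [some ((0:ℕ):Fin n)] ∧ v = [some ((0:ℕ):Fin n), none] := by
  obtain ⟨r, hr⟩ := hp
  have hnil := word_ne_nil hu
  rcases mem_Lc hv with rfl | rfl | ⟨i, hi1, hi2, rfl⟩ | ⟨i, hi1, hi2, rfl⟩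
  · -- v = [some 0]
    exfalso
    have h0 := congrArg List.length hr
    simp only [List.length_append, List.length_cons, List.length_nil] at h0
    have : u.length = 1 ∧ r = [] := by
      constructor
      · have := List.length_pos_iff.mpr hnil; omega
      · have := List.length_pos_iff.mpr hnil
        have : r.length = 0 := by omega
        exact List.length_eq_zero_iff.mp this
    obtain ⟨h1, rfl⟩ := this
    simp at hr
    exact hne hr
  · exfalso
    have h0 := congrArg List.length hr
    simp only [List.length_append, List.length_cons, List.length_nil] at h0
    have hpos := List.length_pos_iff.mpr hnil
    obtain rfl : r = [] := List.length_eq_zero_iff.mp (by omega)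
    simp at hr
    exact hne hr
  · -- v = replicate i none ++ [some i]
    exfalso
    obtain ⟨d, rfl⟩ : ∃ d, i = d + 1 := ⟨i - 1, by omega⟩
    rcases mem_Lc hu with rfl | rfl | ⟨j, hj1, hj2, rfl⟩ | ⟨j, hj1, hj2, rfl⟩
    · rw [List.replicate_succ] at hr; simp at hr
    · rw [List.replicate_succ] at hr; simp at hr
    · rw [List.append_assoc, List.singleton_append] at hr
      obtain ⟨he1, he2, he3⟩ := rep_pivot (by simp) (by simp) _ _ _ _ hr
      obtain rfl : j = d + 1 := he1
      obtain rfl : r = [] := by simpa using he3.symm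
      exact hne (by simp)
    · rw [List.replicate_succ] at hr; simp at hr
  · -- v = some (i-1) :: replicate i none
    rcases mem_Lc hu with rfl | rfl | ⟨j, hj1, hj2, rfl⟩ | ⟨j, hj1, hj2, rfl⟩
    · -- u = [some 0] : the good case
      rw [List.singleton_append] at hr
      obtain ⟨ha, hb⟩ := List.cons_eq_cons.mp hr
      have h0 : (0:ℕ) = i - 1 :=
        castinj (Nat.pos_of_ne_zero (NeZero.ne n)) (by omega) (Option.some_injective _ ha)
      obtain rfl : i = 1 := by omega
      refine ⟨rfl, ?_⟩
      simp [List.replicate]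
    · exfalso
      rw [List.singleton_append] at hr
      obtain ⟨ha, hb⟩ := List.cons_eq_cons.mp hr
      have h0 : n - 1 = i - 1 := castinj (by omega) (by omega) (Option.some_injective _ ha)
      omega
    · exfalso
      obtain ⟨d, rfl⟩ : ∃ d, j = d + 1 := ⟨j - 1, by omega⟩
      rw [List.replicate_succ] at hr
      simp at hr
    · exfalso
      rw [List.cons_append] at hr
      obtain ⟨ha, hb⟩ := List.cons_eq_cons.mp hr
      have h0 : j - 1 = i - 1 := castinj (by omega) (by omega) (Option.some_injective _ ha)
      obtain rfl : j = i := by omega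
      exact hne rfl

/-- For every `n ≥ 2`, the finite language `Lₙ` is not a code, and the shortest word of
`Lₙ∗` having two distinct factorizations into elements of `Lₙ` is
`a₁ b a₂ b² ⋯ a_{n-1} b^{n-1} aₙ`, of length `n(n+1)/2`. -/
theorem stmt4 (n : ℕ) [NeZero n] (hn : 2 ≤ n) :
    ¬ IsCode (Lc n) ∧
    (∃ l₁ l₂, IsFactorization (Lc n) (xc n) l₁ ∧ IsFactorization (Lc n) (xc n) l₂ ∧ l₁ ≠ l₂) ∧
    (∀ y, (∃ l₁ l₂, IsFactorization (Lc n) y l₁ ∧ IsFactorization (Lc n) y l₂ ∧ l₁ ≠ l₂) →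
      (xc n).length ≤ y.length) ∧
    (xc n).length = n * (n + 1) / 2 := by
  -- length of xc
  have h2len : 2 * (xc n).length = n * (n + 1) := by
    rw [xc]
    rw [List.length_append, List.length_cons, List.length_nil, Nat.mul_add]
    rw [len_aux (fun j => (some ((j : ℕ) : Fin n) : Option (Fin n))) none (n - 1)]
    obtain ⟨c, rfl⟩ : ∃ c, n = c + 2 := ⟨n - 2, by omega⟩
    have : (c + 1) * (c + 1 + 3) + 2 * 1 = (c + 2) * (c + 2 + 1) := by ring
    simpa using this
  have hxlen : (xc n).length = n * (n + 1) / 2 := by omega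
  -- the two factorizations
  set L₁ : List (List (Option (Fin n))) :=
    [some ((0:ℕ) : Fin n)] ::
      (List.range (n-1)).map
        (fun j => List.replicate (j+1) none ++ [some ((j+1 : ℕ) : Fin n)]) with hL₁
  set L₂ : List (List (Option (Fin n))) :=
    ((List.range (n-1)).map
        (fun j => some ((j:ℕ) : Fin n) :: List.replicate (j+1) none)) ++
      [[some ((n-1:ℕ) : Fin n)]] with hL₂
  have hF₁ : IsFactorization (Lc n) (xc n) L₁ := by
    constructor
    · intro w hw
      rw [hL₁] at hw
      rcases List.mem_cons.mp hw with rfl | hw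
      · exact m1
      · obtain ⟨j, hj, rfl⟩ := List.mem_map.mp hw
        rw [List.mem_range] at hj
        exact m3 (by omega) (by omega)
    · rw [hL₁, xc, List.flatten_cons]
      rw [flatten_aux (fun j => (some ((j : ℕ) : Fin n) : Option (Fin n)))
        (fun j => List.replicate (j+1) none) (n-1)]
      simp
  have hF₂ : IsFactorization (Lc n) (xc n) L₂ := by
    constructor
    · intro w hw
      rw [hL₂] at hw
      rcases List.mem_append.mp hw with hw | hw
      · obtain ⟨j, hj, rfl⟩ := List.mem_map.mp hw
        rw [List.mem_range] at hj
        have := m4 (n := n) (i := j + 1) (by omega) (by omega)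
        simpa using this
      · obtain rfl : w = [some ((n-1:ℕ) : Fin n)] := by simpa using hw
        exact m2
    · rw [hL₂, xc, List.flatten_append]
      simp
  have hne12 : L₁ ≠ L₂ := by
    intro h
    obtain ⟨t, ht⟩ : ∃ t, List.range (n-1) = 0 :: t :=
      ⟨List.map Nat.succ (List.range (n-2)), by
        rw [show n - 1 = (n-2) + 1 by omega, List.range_succ_eq_map]⟩
    rw [hL₁, hL₂, ht] at h
    simp at h
  -- minimality
  have hmin : ∀ y : List (Option (Fin n)),
      (∃ l₁ l₂, IsFactorization (Lc n) y l₁ ∧ IsFactorization (Lc n) y l₂ ∧ l₁ ≠ l₂) →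
      (xc n).length ≤ y.length := by
    rintro y ⟨m₁, m₂, hm₁, hm₂, hmne⟩
    obtain ⟨u, r₁, v, r₂, hne', heq', hs₁, hs₂⟩ :=
      diverge m₁ m₂ (hm₁.2.trans hm₂.2.symm) hmne
        (fun w hw => word_ne_nil (hm₁.1 w hw)) (fun w hw => word_ne_nil (hm₂.1 w hw))
    have hu : u ∈ Lc n := hm₁.1 u (hs₁.subset (by simp))
    have hv : v ∈ Lc n := hm₂.1 v (hs₂.subset (by simp))
    have hr₁ : ∀ w ∈ r₁, w ∈ Lc n := fun w hw => hm₁.1 w (hs₁.subset (by simp [hw]))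
    have hr₂ : ∀ w ∈ r₂, w ∈ Lc n := fun w hw => hm₂.1 w (hs₂.subset (by simp [hw]))
    have hor := List.prefix_or_prefix_of_prefix (List.prefix_append u r₁.flatten)
      (heq' ▸ List.prefix_append v r₂.flatten)
    rw [hxlen]
    rcases hor with hp | hp
    · obtain ⟨hu0, hv0⟩ := seed hu hv hne' hp
      rw [hu0, hv0] at heq'
      have hflat : r₁.flatten = List.replicate 1 none ++ r₂.flatten := by
        simpa [List.replicate] using heq'
      have hch := chase n n 1 (by omega) (by omega) r₁ r₂ (by omega) hr₁ hr₂ hflat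
      have hy : 1 + r₁.flatten.length ≤ y.length := by
        obtain ⟨p, hp'⟩ := hs₁
        have : y = m₁.flatten := hm₁.2.symm
        rw [this, ← hp']
        rw [List.flatten_append, List.flatten_cons, hu0]
        simp
        omega
      omega
    · obtain ⟨hv0, hu0⟩ := seed hv hu (Ne.symm hne') hp
      rw [hu0, hv0] at heq'
      have hflat : r₂.flatten = List.replicate 1 none ++ r₁.flatten := by
        have := heq'.symm
        simpa [List.replicate] using this
      have hch := chase n n 1 (by omega) (by omega) r₂ r₁ (by omega) hr₂ hr₁ hflat
      have hy : 1 + r₂.flatten.length ≤ y.length := by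
        obtain ⟨p, hp'⟩ := hs₂
        have : y = m₂.flatten := hm₂.2.symm
        rw [this, ← hp']
        rw [List.flatten_append, List.flatten_cons, hv0]
        simp
        omega
      omega
  refine ⟨?_, ⟨L₁, L₂, hF₁, hF₂, hne12⟩, hmin, hxlen⟩
  intro h
  exact hne12 (h (xc n) L₁ L₂ hF₁ hF₂)
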